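/- Let s(x) = c(x−a)(x−b) be a quadratic polynomial with real coefficients, where c > 0 and a ≤ b are real numbers, and define f(x) = x − 2s(x)/s′(x). Then f is nonincreasing on (b, ∞); that is, for all real numbers x, y with b < x ≤ y one has f(y) ≤ f(x). -/

import Mathlib

/-- Monotonicity of `x - 2s(x)/s'(x)` above the roots of a real-rooted quadratic
(Lemma 3.8). -/
theorem stmt_4 (c a b : ℝ) (hc : 0 < c) (hab : a ≤ b) (x y : ℝ) (hx : b < x) (hxy : x ≤ y) :
    y - 2 * (c * (y - a) * (y - b)) / (c * (2 * y - a - b)) ≤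
      x - 2 * (c * (x - a) * (x - b)) / (c * (2 * x - a - b)) := by
  have hdx : 0 < 2 * x - a - b := by linarith
  have hdy : 0 < 2 * y - a - b := by linarith
  have key : ∀ z : ℝ, 0 < 2 * z - a - b →
      z - 2 * (c * (z - a) * (z - b)) / (c * (2 * z - a - b)) =
        ((a + b) * z - 2 * a * b) / (2 * z - a - b) := by
    intro z hz
    have h : 2 * (c * (z - a) * (z - b)) / (c * (2 * z - a - b)) = 2 * (z - a) * (z - b) / (2 * z - a - b) := by
      rw [div_eq_div_iff (mul_ne_zero hc.ne' hz.ne') hz.ne']; ring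
    rw [h, eq_div_iff hz.ne', sub_mul, div_mul_cancel₀ _ hz.ne']
    ring
  rw [key x hdx, key y hdy, div_le_div_iff₀ hdy hdx]
  nlinarith [sq_nonneg (a - b), mul_nonneg (sq_nonneg (a - b)) (sub_nonneg.2 hxy)]
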